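/- Let S be a blocking semioval with exactly 25 points in PG(2,11) having a 10-secant line ℓ, let Q and R be the two points of ℓ not in S, and let S_Q (respectively S_R) be the set of points of S not on ℓ whose unique tangent line to S passes through Q (respectively R). Then |S_Q| + |S_R| = 15, |S_Q| ≥ 7, and |S_R| ≥ 7; consequently one of |S_Q|, |S_R| equals 7 and the other equals 8. -/

import Mathlib

instance : Fact (Nat.Prime 11) := ⟨by norm_num⟩

/-- The points of `PG(2,11)`: the projectivization of `(ZMod 11)^3`. -/
abbrev PGPoint : Type := Projectivization (ZMod 11) (Fin 3 → ZMod 11)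

/-- The lines of `PG(2,11)`: the 2-dimensional subspaces of `(ZMod 11)^3`. -/
abbrev PGLine : Type :=
  {W : Submodule (ZMod 11) (Fin 3 → ZMod 11) // Module.finrank (ZMod 11) W = 2}

/-- Incidence: a point lies on a line when its representing 1-dimensional
subspace is contained in the line's 2-dimensional subspace. -/
def PGmem (P : PGPoint) (L : PGLine) : Prop := Projectivization.submodule P ≤ L.val

/-- The set of points lying on a line. -/
def linePts (L : PGLine) : Set PGPoint := {P | PGmem P L}

/-- The set of points of `S` lying on the line `L`. -/
def secantPts (S : Set PGPoint) (L : PGLine) : Set PGPoint := {P ∈ S | PGmem P L}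

/-- A line is a `k`-secant to `S` if it meets `S` in exactly `k` points. -/
def IsSecant (S : Set PGPoint) (k : ℕ) (L : PGLine) : Prop := (secantPts S L).ncard = k

/-- A tangent line to `S` is a 1-secant. -/
def IsTangent (S : Set PGPoint) (L : PGLine) : Prop := IsSecant S 1 L

/-- A blocking set: every line meets `S`, but `S` contains no line. -/
def IsBlockingSet (S : Set PGPoint) : Prop :=
  (∀ L : PGLine, (secantPts S L).Nonempty) ∧ ∀ L : PGLine, ¬ linePts L ⊆ S

/-- A semioval: every point of `S` lies on exactly one tangent line to `S`. -/
def IsSemioval (S : Set PGPoint) : Prop :=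
  ∀ P ∈ S, ∃! L : PGLine, PGmem P L ∧ IsTangent S L

/-- A blocking semioval is both a blocking set and a semioval. -/
def IsBlockingSemioval (S : Set PGPoint) : Prop := IsBlockingSet S ∧ IsSemioval S

open Projectivization Module


instance : Finite PGPoint := by unfold PGPoint Projectivization; infer_instance
noncomputable instance : Fintype PGPoint := Fintype.ofFinite _
instance : Finite PGLine := by
  exact Finite.of_injective (fun L => (L.val : Set (Fin 3 → ZMod 11))) (fun a b h => Subtype.ext (SetLike.coe_injective h))

lemma mem_iff_rep (P : PGPoint) (L : PGLine) : PGmem P L ↔ P.rep ∈ L.val := by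
  rw [PGmem, submodule_eq, Submodule.span_singleton_le_iff_mem]

lemma mem_mk_iff (v : Fin 3 → ZMod 11) (hv : v ≠ 0) (L : PGLine) : PGmem (mk (ZMod 11) v hv) L ↔ v ∈ L.val := by
  rw [PGmem, submodule_mk, Submodule.span_singleton_le_iff_mem]

lemma submodule_ne {P P' : PGPoint} (h : P ≠ P') :
    Projectivization.submodule P ≠ Projectivization.submodule P' :=
  fun he => h (Projectivization.submodule_injective he)

/-- The unique line through two distinct points. -/
lemma exists_unique_line {P P' : PGPoint} (h : P ≠ P') :
    ∃! L : PGLine, PGmem P L ∧ PGmem P' L := by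
  have h1 : finrank (ZMod 11) (Projectivization.submodule P ⊔ Projectivization.submodule P' :
      Submodule (ZMod 11) (Fin 3 → ZMod 11)) = 2 := by
    have := Submodule.finrank_sup_add_finrank_inf_eq
      (Projectivization.submodule P) (Projectivization.submodule P')
    rw [finrank_submodule, finrank_submodule] at this
    have hinf : finrank (ZMod 11) (Projectivization.submodule P ⊓ Projectivization.submodule P' :
        Submodule (ZMod 11) (Fin 3 → ZMod 11)) = 0 := by
      by_contra hne
      have hle : Projectivization.submodule P ⊓ Projectivization.submodule P' ≤
          Projectivization.submodule P := inf_le_left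
      have h2 : Projectivization.submodule P ⊓ Projectivization.submodule P' =
          Projectivization.submodule P := by
        apply Submodule.eq_of_le_of_finrank_le hle
        rw [finrank_submodule]; omega
      have hle' : Projectivization.submodule P ≤ Projectivization.submodule P' := by
        rw [← h2]; exact inf_le_right
      exact submodule_ne h (Submodule.eq_of_le_of_finrank_eq hle'
        (by rw [finrank_submodule, finrank_submodule]))
      
    omega
  refine ⟨⟨_, h1⟩, ⟨le_sup_left, le_sup_right⟩, ?_⟩
  rintro ⟨M, hM⟩ ⟨hPM, hP'M⟩
  exact Subtype.ext (Submodule.eq_of_le_of_finrank_eq (sup_le hPM hP'M) (by rw [h1, hM])).symm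

/-- Any two lines meet. -/
lemma lines_meet (L M : PGLine) : ∃ P : PGPoint, PGmem P L ∧ PGmem P M := by
  have hsup : finrank (ZMod 11) (L.val ⊔ M.val : Submodule (ZMod 11) (Fin 3 → ZMod 11)) ≤ 3 := by
    have := Submodule.finrank_le (L.val ⊔ M.val)
    simpa using this
  have := Submodule.finrank_sup_add_finrank_inf_eq L.val M.val
  rw [L.prop, M.prop] at this
  have hinf : 1 ≤ finrank (ZMod 11) (L.val ⊓ M.val : Submodule (ZMod 11) (Fin 3 → ZMod 11)) := by omega
  obtain ⟨v, hv, hvne⟩ := Submodule.exists_mem_ne_zero_of_ne_bot (p := L.val ⊓ M.val)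
    (by intro hbot; rw [hbot] at hinf; simp at hinf)
  exact ⟨mk (ZMod 11) v hvne, by rw [mem_mk_iff]; exact (Submodule.mem_inf.mp hv).1,
    by rw [mem_mk_iff]; exact (Submodule.mem_inf.mp hv).2⟩

/-- Two distinct lines meet in at most one point. -/
lemma meet_unique {L M : PGLine} (h : L ≠ M) {P P' : PGPoint}
    (h1 : PGmem P L) (h2 : PGmem P M) (h3 : PGmem P' L) (h4 : PGmem P' M) : P = P' := by
  by_contra hne
  obtain ⟨N, -, hu⟩ := exists_unique_line hne
  exact h ((hu L ⟨h1, h3⟩).trans (hu M ⟨h2, h4⟩).symm)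

open scoped Classical in
/-- The projectivization of a 2-dimensional space over `ZMod 11` has 12 points. -/
lemma card_proj_two (W : Submodule (ZMod 11) (Fin 3 → ZMod 11))
    (hW : finrank (ZMod 11) W = 2) : Nat.card (Projectivization (ZMod 11) W) = 12 := by
  have : Fintype W := Fintype.ofFinite W
  have hcardW : Fintype.card W = 121 := by
    rw [card_eq_pow_finrank (K := ZMod 11), hW]
    norm_num [ZMod.card]
  have hsub : Nat.card {v : W // v ≠ 0} = 120 := by
    rw [Nat.card_eq_fintype_card, Fintype.card_subtype_compl, hcardW, Fintype.card_subtype_eq]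
  set f : Projectivization (ZMod 11) W × (ZMod 11)ˣ → {v : W // v ≠ 0} :=
    fun pa => ⟨((pa.2 : ZMod 11)) • pa.1.rep,
      smul_ne_zero (Units.ne_zero pa.2) pa.1.rep_nonzero⟩ with hf
  have hbij : Function.Bijective f := by
    constructor
    · rintro ⟨p, a⟩ ⟨q, b⟩ hab
      simp only [hf, Subtype.mk.injEq] at hab
      have hpq : p = q := by
        rw [← p.mk_rep, ← q.mk_rep, Projectivization.mk_eq_mk_iff']
        refine ⟨(a : ZMod 11)⁻¹ * (b : ZMod 11), ?_⟩
        rw [mul_smul, ← hab, inv_smul_smul₀ (Units.ne_zero a)]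
      subst hpq
      exact Prod.ext rfl (Units.ext (smul_left_injective (ZMod 11) p.rep_nonzero hab))
    · rintro ⟨v, hv⟩
      obtain ⟨a, ha⟩ := Projectivization.exists_smul_eq_mk_rep (ZMod 11) v hv
      refine ⟨⟨Projectivization.mk (ZMod 11) v hv, a⁻¹⟩, ?_⟩
      simp only [hf]
      ext
      simp only [Units.val_inv_eq_inv_val]
      rw [← ha, Units.smul_def, inv_smul_smul₀ (Units.ne_zero a)]
  have hcc := Nat.card_eq_of_bijective f hbij
  rw [hsub, Nat.card_prod, Nat.card_eq_fintype_card (α := (ZMod 11)ˣ)] at hcc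
  have hu : Fintype.card (ZMod 11)ˣ = 10 := by
    rw [ZMod.card_units_eq_totient]; rfl
  rw [hu] at hcc
  omega

/-- Every line has exactly 12 points. -/
lemma ncard_linePts (L : PGLine) : (linePts L).ncard = 12 := by
  have hinj0 : Function.Injective L.val.subtype := Submodule.injective_subtype L.val
  set g : Projectivization (ZMod 11) L.val → PGPoint :=
    Projectivization.map L.val.subtype hinj0 with hg
  have hginj : Function.Injective g := Projectivization.map_injective L.val.subtype hinj0
  have hrange : Set.range g = linePts L := by
    ext P
    constructor
    · rintro ⟨p, rfl⟩
      induction p using Projectivization.ind with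
      | h w hw =>
        rw [hg, Projectivization.map_mk]
        show PGmem _ L
        rw [mem_mk_iff]
        exact w.2
    · intro hP
      have hmem : P.rep ∈ L.val := (mem_iff_rep P L).mp hP
      refine ⟨Projectivization.mk (ZMod 11) ⟨P.rep, hmem⟩
        (by simp [Subtype.ext_iff, P.rep_nonzero]), ?_⟩
      rw [hg, Projectivization.map_mk]
      exact P.mk_rep
  calc (linePts L).ncard = Nat.card (linePts L) := (Nat.card_coe_set_eq _).symm
    _ = Nat.card (Set.range g) := by rw [hrange]
    _ = Nat.card (Projectivization (ZMod 11) L.val) := Nat.card_range_of_injective hginj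
    _ = 12 := card_proj_two L.val L.prop

/-- The chosen common point of two lines. -/
noncomputable def meetPt (L M : PGLine) : PGPoint := (lines_meet L M).choose

lemma meetPt_mem_left (L M : PGLine) : PGmem (meetPt L M) L := (lines_meet L M).choose_spec.1
lemma meetPt_mem_right (L M : PGLine) : PGmem (meetPt L M) M := (lines_meet L M).choose_spec.2

/-- There is a line not through a given point. -/
lemma exists_line_avoiding (Q : PGPoint) : ∃ M : PGLine, ¬ PGmem Q M := by
  obtain ⟨W, hW⟩ := Submodule.exists_isCompl (Projectivization.submodule Q)
  have hrk : finrank (ZMod 11) W = 2 := by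
    have := Submodule.finrank_add_eq_of_isCompl hW
    rw [Projectivization.finrank_submodule] at this
    have h3 : finrank (ZMod 11) (Fin 3 → ZMod 11) = 3 := by simp
    omega
  refine ⟨⟨W, hrk⟩, fun hmem => ?_⟩
  have : Projectivization.submodule Q ≤ Projectivization.submodule Q ⊓ W :=
    le_inf le_rfl hmem
  rw [hW.inf_eq_bot, le_bot_iff] at this
  have : Q.rep ∈ (⊥ : Submodule (ZMod 11) (Fin 3 → ZMod 11)) := by
    rw [← this, Projectivization.submodule_eq]
    exact Submodule.mem_span_singleton_self _
  exact Q.rep_nonzero (by simpa using this)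

/-- There are exactly 12 lines through any point. -/
lemma ncard_linesThrough (Q : PGPoint) : {L : PGLine | PGmem Q L}.ncard = 12 := by
  obtain ⟨M, hM⟩ := exists_line_avoiding Q
  set F : {L : PGLine // PGmem Q L} → (linePts M) :=
    fun L => ⟨meetPt L.val M, meetPt_mem_right L.val M⟩ with hF
  have hbij : Function.Bijective F := by
    constructor
    · rintro ⟨L, hL⟩ ⟨L', hL'⟩ h
      simp only [hF, Subtype.mk.injEq] at h
      have h' : meetPt L M = meetPt L' M := congrArg Subtype.val h
      have hXQ : meetPt L M ≠ Q := fun he => hM (he ▸ meetPt_mem_right L M)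
      obtain ⟨N, -, hu⟩ := exists_unique_line hXQ
      refine Subtype.ext ((hu L ⟨meetPt_mem_left L M, hL⟩).trans ?_)
      rw [h] at *
      exact (hu L' ⟨by rw [h']; exact meetPt_mem_left L' M, hL'⟩).symm
    · rintro ⟨X, hX⟩
      have hXQ : Q ≠ X := fun he => hM (he ▸ hX)
      obtain ⟨L, ⟨hQL, hXL⟩, -⟩ := exists_unique_line hXQ
      have hLM : L ≠ M := fun he => hM (he ▸ hQL)
      refine ⟨⟨L, hQL⟩, Subtype.ext ?_⟩
      exact meet_unique hLM (meetPt_mem_left L M) (meetPt_mem_right L M) hXL hX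
  calc {L : PGLine | PGmem Q L}.ncard = Nat.card {L : PGLine // PGmem Q L} :=
        (Nat.card_coe_set_eq _).symm
    _ = Nat.card (linePts M) := Nat.card_eq_of_bijective F hbij
    _ = (linePts M).ncard := Nat.card_coe_set_eq _
    _ = 12 := ncard_linePts M

noncomputable instance : Fintype PGLine := Fintype.ofFinite _

open scoped Classical in
lemma key_count (S : Set PGPoint) (hbl : ∀ L : PGLine, (secantPts S L).Nonempty)
    (ℓ : PGLine) (hℓ : IsSecant S 10 ℓ) (X : PGPoint) (hXℓ : PGmem X ℓ) (hXS : X ∉ S)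
    (hT : (S \ linePts ℓ).ncard = 15) :
    7 ≤ {P | P ∈ S ∧ ¬ PGmem P ℓ ∧
          ∃ t : PGLine, PGmem P t ∧ IsTangent S t ∧ PGmem X t}.ncard := by
  set SX := {P | P ∈ S ∧ ¬ PGmem P ℓ ∧
      ∃ t : PGLine, PGmem P t ∧ IsTangent S t ∧ PGmem X t} with hSX
  -- the pencil of lines through X other than ℓ
  set M : Set PGLine := {m | PGmem X m ∧ m ≠ ℓ} with hM
  have hMcard : M.ncard = 11 := by
    have h1 : M = {m : PGLine | PGmem X m} \ {ℓ} := by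
      ext m; simp [hM, and_comm]
    rw [h1, Set.ncard_diff_singleton_of_mem
      (show ℓ ∈ {m : PGLine | PGmem X m} from hXℓ), ncard_linesThrough]
  set Mf : Finset PGLine := M.toFinset with hMf
  have hMfcard : Mf.card = 11 := by
    rw [hMf, ← Set.ncard_eq_toFinset_card', hMcard]
  -- distinct lines through X share only X
  have honly : ∀ m ∈ M, ∀ m' ∈ M, m ≠ m' → ∀ P : PGPoint,
      PGmem P m → PGmem P m' → P = X := by
    intro m hm m' hm' hne P h1 h2
    exact meet_unique hne h1 h2 hm.1 hm'.1
  -- each secant set of a line in M sits inside S \ ℓ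
  have hsub : ∀ m ∈ M, secantPts S m ⊆ S \ linePts ℓ := by
    rintro m hm P ⟨hPS, hPm⟩
    refine ⟨hPS, fun hPℓ => ?_⟩
    have : P = X := meet_unique hm.2 hPm hPℓ hm.1 hXℓ
    exact hXS (this ▸ hPS)
  have hcover : (S \ linePts ℓ).toFinset = Mf.biUnion (fun m => (secantPts S m).toFinset) := by
    ext P
    simp only [Set.mem_toFinset, Finset.mem_biUnion, hMf]
    constructor
    · rintro ⟨hPS, hPℓ⟩
      have hPX : P ≠ X := fun he => hXS (he ▸ hPS)
      obtain ⟨m, ⟨hPm, hXm⟩, -⟩ := exists_unique_line hPX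
      have hmℓ : m ≠ ℓ := fun he => hPℓ (he ▸ hPm)
      exact ⟨m, ⟨hXm, hmℓ⟩, ⟨hPS, hPm⟩⟩
    · rintro ⟨m, hm, hP⟩
      exact hsub m hm hP
  have hdisj : ∀ m ∈ Mf, ∀ m' ∈ Mf, m ≠ m' →
      Disjoint ((secantPts S m).toFinset) ((secantPts S m').toFinset) := by
    intro m hm m' hm' hne
    rw [Finset.disjoint_left]
    intro P hP hP'
    rw [Set.mem_toFinset] at hP hP'
    rw [hMf, Set.mem_toFinset] at hm hm'
    have := honly m hm m' hm' hne P hP.2 hP'.2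
    exact hXS (this ▸ hP.1)
  have hsum : ∑ m ∈ Mf, (secantPts S m).toFinset.card = 15 := by
    rw [← Finset.card_biUnion hdisj, ← hcover, ← Set.ncard_eq_toFinset_card', hT]
  -- tangent lines in the pencil
  set Af : Finset PGLine := Mf.filter (fun m => IsTangent S m) with hAf
  -- sum bound gives 7 ≤ Af.card
  have hAcard : 7 ≤ Af.card := by
    have h1 : ∑ m ∈ Af, (secantPts S m).toFinset.card = Af.card := by
      rw [Finset.sum_congr rfl (fun m hm => ?_), Finset.sum_const, smul_eq_mul, mul_one]
      have ht : IsTangent S m := (Finset.mem_filter.mp (hAf ▸ hm)).2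
      rw [← Set.ncard_eq_toFinset_card']; exact ht
    have h2 : (Mf.filter (fun m => ¬ IsTangent S m)).card * 2 ≤
        ∑ m ∈ Mf.filter (fun m => ¬ IsTangent S m), (secantPts S m).toFinset.card := by
      have hb : ∀ m ∈ Mf.filter (fun m => ¬ IsTangent S m),
          2 ≤ (secantPts S m).toFinset.card := by
        intro m hm
        obtain ⟨hmM, hmnt⟩ := Finset.mem_filter.mp hm
        have h1' : 0 < (secantPts S m).ncard :=
          (Set.ncard_pos (Set.toFinite _)).mpr (hbl m)
        have h2' : (secantPts S m).ncard ≠ 1 := hmnt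
        rw [← Set.ncard_eq_toFinset_card']
        omega
      have := Finset.card_nsmul_le_sum (Mf.filter (fun m => ¬ IsTangent S m))
        (fun m => (secantPts S m).toFinset.card) 2 hb
      simpa [smul_eq_mul] using this
    have h3 := Finset.sum_filter_add_sum_filter_not Mf (fun m => IsTangent S m)
      (fun m => (secantPts S m).toFinset.card)
    have h4 := Finset.card_filter_add_card_filter_not (s := Mf)
      (p := fun m => IsTangent S m)
    rw [hsum] at h3
    rw [hMfcard] at h4
    rw [← hAf] at h3 h4
    omega
  -- SX is in bijection with the set of tangent lines of the pencil
  have hbijcard : SX.ncard = Af.card := by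
    have hAfM : ∀ m : {m : PGLine // m ∈ Af}, m.1 ∈ M :=
      fun m => Set.mem_toFinset.mp (Finset.mem_filter.mp m.2).1
    have hAftan : ∀ m : {m : PGLine // m ∈ Af}, IsTangent S m.1 :=
      fun m => (Finset.mem_filter.mp m.2).2
    have hex : ∀ m : {m : PGLine // m ∈ Af}, ∃ P, secantPts S m.1 = {P} :=
      fun m => Set.ncard_eq_one.mp (hAftan m)
    set pt : {m : PGLine // m ∈ Af} → PGPoint := fun m => (hex m).choose with hptdef
    have hpts : ∀ m : {m : PGLine // m ∈ Af}, secantPts S m.1 = {pt m} :=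
      fun m => (hex m).choose_spec
    have hptsec : ∀ m : {m : PGLine // m ∈ Af}, pt m ∈ secantPts S m.1 := by
      intro m; rw [hpts m]; exact rfl
    have hGmem : ∀ m : {m : PGLine // m ∈ Af}, pt m ∈ SX := by
      intro m
      obtain ⟨hS1, hm1⟩ := hptsec m
      have hnl := (hsub m.1 (hAfM m) ⟨hS1, hm1⟩).2
      exact ⟨hS1, hnl, m.1, hm1, hAftan m, (hAfM m).1⟩
    set G : {m : PGLine // m ∈ Af} → {P : PGPoint // P ∈ SX} :=
      fun m => ⟨pt m, hGmem m⟩ with hG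
    have hbij : Function.Bijective G := by
      constructor
      · intro m m' hmm
        simp only [hG, Subtype.mk.injEq] at hmm
        by_contra hne
        have hne' : m.1 ≠ m'.1 := fun he => hne (Subtype.ext he)
        have := honly m.1 (hAfM m) m'.1 (hAfM m') hne' (pt m)
          (hptsec m).2 (hmm ▸ (hptsec m').2)
        exact hXS (this ▸ (hptsec m).1)
      · rintro ⟨P, hP⟩
        obtain ⟨hPS, hPℓ, t, hPt, htan, hXt⟩ := hP
        have htℓ : t ≠ ℓ := by
          intro he
          have : (10 : ℕ) = 1 := by rw [← hℓ, ← htan, he]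
          omega
        have htAf : t ∈ Af := Finset.mem_filter.mpr
          ⟨Set.mem_toFinset.mpr ⟨hXt, htℓ⟩, htan⟩
        refine ⟨⟨t, htAf⟩, Subtype.ext ?_⟩
        have : P ∈ secantPts S t := ⟨hPS, hPt⟩
        rw [hpts ⟨t, htAf⟩] at this
        exact this.symm
    calc SX.ncard = Nat.card SX := (Nat.card_coe_set_eq _).symm
      _ = Nat.card {m : PGLine // m ∈ Af} := (Nat.card_eq_of_bijective G hbij).symm
      _ = Af.card := Nat.card_eq_finsetCard Af
  omega

theorem SQ_SR_sizes (S : Set PGPoint) (hS : IsBlockingSemioval S) (hcard : S.ncard = 25)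
    (ℓ : PGLine) (hℓ : IsSecant S 10 ℓ)
    (Q R : PGPoint) (hQR : Q ≠ R)
    (hQℓ : PGmem Q ℓ) (hRℓ : PGmem R ℓ) (hQS : Q ∉ S) (hRS : R ∉ S)
    (SQ : Set PGPoint)
    (hSQ : SQ = {P | P ∈ S ∧ ¬ PGmem P ℓ ∧ ∃ t : PGLine, PGmem P t ∧ IsTangent S t ∧ PGmem Q t})
    (SR : Set PGPoint)
    (hSR : SR = {P | P ∈ S ∧ ¬ PGmem P ℓ ∧ ∃ t : PGLine, PGmem P t ∧ IsTangent S t ∧ PGmem R t}) :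
    SQ.ncard + SR.ncard = 15 ∧ 7 ≤ SQ.ncard ∧ 7 ≤ SR.ncard ∧
      ((SQ.ncard = 7 ∧ SR.ncard = 8) ∨ (SQ.ncard = 8 ∧ SR.ncard = 7)) := by
  obtain ⟨⟨hbl, hnl⟩, hsemi⟩ := hS
  have hsec : S ∩ linePts ℓ = secantPts S ℓ := rfl
  have hℓ' : (secantPts S ℓ).ncard = 10 := hℓ
  -- the 15 points of S off ℓ
  have hT : (S \ linePts ℓ).ncard = 15 := by
    have h := Set.ncard_inter_add_ncard_diff_eq_ncard S (linePts ℓ) (Set.toFinite _)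
    rw [hsec, hℓ', hcard] at h
    omega
  -- the two points of ℓ off S are exactly Q and R
  have hQRset : linePts ℓ \ S = {Q, R} := by
    have h2 : (linePts ℓ \ S).ncard = 2 := by
      have h := Set.ncard_inter_add_ncard_diff_eq_ncard (linePts ℓ) S (Set.toFinite _)
      have hco : linePts ℓ ∩ S = secantPts S ℓ := by
        ext P; exact ⟨fun hh => ⟨hh.2, hh.1⟩, fun hh => ⟨hh.2, hh.1⟩⟩
      rw [hco, hℓ', ncard_linePts] at h
      omega
    have hpair : {Q, R} ⊆ linePts ℓ \ S := by
      rintro P (rfl | rfl)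
      · exact ⟨hQℓ, hQS⟩
      · exact ⟨hRℓ, hRS⟩
    exact (Set.eq_of_subset_of_ncard_le hpair
      (by rw [h2, Set.ncard_pair hQR]) (Set.toFinite _)).symm
  -- SQ and SR partition S \ ℓ
  have hunion : SQ ∪ SR = S \ linePts ℓ := by
    ext P
    constructor
    · rintro (hP | hP)
      · rw [hSQ] at hP; exact ⟨hP.1, hP.2.1⟩
      · rw [hSR] at hP; exact ⟨hP.1, hP.2.1⟩
    · rintro ⟨hPS, hPℓ⟩
      obtain ⟨t, ⟨hPt, htan⟩, -⟩ := hsemi P hPS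
      have htℓ : t ≠ ℓ := by
        intro he
        have h10 : (10 : ℕ) = 1 := by rw [← hℓ', ← htan, he]
        omega
      set X := meetPt t ℓ with hX
      have hXt : PGmem X t := meetPt_mem_left t ℓ
      have hXℓ : PGmem X ℓ := meetPt_mem_right t ℓ
      have hXS : X ∉ S := by
        intro hXmem
        have hXP : X ≠ P := fun he => hPℓ (he ▸ hXℓ)
        obtain ⟨P0, hP0⟩ := Set.ncard_eq_one.mp htan
        have e1 : X = P0 := by
          have : X ∈ secantPts S t := ⟨hXmem, hXt⟩
          rwa [hP0] at this
        have e2 : P = P0 := by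
          have : P ∈ secantPts S t := ⟨hPS, hPt⟩
          rwa [hP0] at this
        exact hXP (e1.trans e2.symm)
      have : X ∈ linePts ℓ \ S := ⟨hXℓ, hXS⟩
      rw [hQRset] at this
      rcases this with h | h
      · left; rw [hSQ]; exact ⟨hPS, hPℓ, t, hPt, htan, h ▸ hXt⟩
      · right; rw [hSR]; exact ⟨hPS, hPℓ, t, hPt, htan, h ▸ hXt⟩
  have hdisj : Disjoint SQ SR := by
    rw [Set.disjoint_left]
    intro P hPQ hPR
    rw [hSQ] at hPQ
    rw [hSR] at hPR
    obtain ⟨hPS, hPℓ, t, hPt, htan, hQt⟩ := hPQ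
    obtain ⟨-, -, t', hPt', htan', hRt'⟩ := hPR
    obtain ⟨u, -, hu⟩ := hsemi P hPS
    have htt' : t = t' := (hu t ⟨hPt, htan⟩).trans (hu t' ⟨hPt', htan'⟩).symm
    subst htt'
    obtain ⟨m, -, hm⟩ := exists_unique_line hQR
    have htℓ2 : t = ℓ := (hm t ⟨hQt, hRt'⟩).trans (hm ℓ ⟨hQℓ, hRℓ⟩).symm
    have h10 : (10 : ℕ) = 1 := by rw [← hℓ', ← htan, htℓ2]
    omega
  have hsum : SQ.ncard + SR.ncard = 15 := by
    rw [← Set.ncard_union_eq hdisj (Set.toFinite _) (Set.toFinite _), hunion, hT]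
  have hQ7 : 7 ≤ SQ.ncard := by
    rw [hSQ]; exact key_count S hbl ℓ hℓ Q hQℓ hQS hT
  have hR7 : 7 ≤ SR.ncard := by
    rw [hSR]; exact key_count S hbl ℓ hℓ R hRℓ hRS hT
  refine ⟨hsum, hQ7, hR7, ?_⟩
  omega
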